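/- arXiv:1412.4360 — 3 statements merged into one kernel-verified Lean document; each statement's English description precedes it below -/
import Mathlib

section
/- Let V, W be finite dimensional vector spaces over a field, ∂ : V → V a linear map with ∂² = 0, and Φ : V → W, Ψ : W → V, R : V → V linear maps satisfying Ψ∘Φ = id_V + R∘∂ + ∂∘R. Then dim(ker ∂ / im ∂) ≤ dim W. -/
/-- If `Ψ ∘ Φ = id + R∘d + d∘R` with `d² = 0`, then the dimension of the
homology `ker d / im d` is at most `dim W`. -/
theorem homology_dim_le (K V W : Type*) [Field K]
    [AddCommGroup V] [Module K V] [FiniteDimensional K V]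
    [AddCommGroup W] [Module K W] [FiniteDimensional K W]
    (d : V →ₗ[K] V) (hd : d ∘ₗ d = 0)
    (Φ : V →ₗ[K] W) (Ψ : W →ₗ[K] V) (R : V →ₗ[K] V)
    (h : Ψ ∘ₗ Φ = LinearMap.id + R ∘ₗ d + d ∘ₗ R) :
    Module.finrank K
        (LinearMap.ker d ⧸ (LinearMap.range d).comap (LinearMap.ker d).subtype)
      ≤ Module.finrank K W := by
  set S := (LinearMap.range d).comap (LinearMap.ker d).subtype with hS
  set f := Φ ∘ₗ (LinearMap.ker d).subtype with hf
  have hker : LinearMap.ker f ≤ S := by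
    rintro ⟨x, hx⟩ hfx
    have hx' : d x = 0 := hx
    have hΦ : Φ x = 0 := hfx
    have := congrArg (fun g => g x) h
    simp only [LinearMap.comp_apply, LinearMap.add_apply, LinearMap.id_apply,
      hΦ, hx', map_zero, zero_add] at this
    -- this : 0 = x + d (R x)
    rw [add_zero] at this
    exact ⟨-(R x), by rw [map_neg]; exact neg_eq_of_add_eq_zero_left this.symm⟩
  have h1 : Module.finrank K (LinearMap.ker d ⧸ S) + Module.finrank K S
      = Module.finrank K (LinearMap.ker d) := Submodule.finrank_quotient_add_finrank S
  have h2 : Module.finrank K (LinearMap.range f) + Module.finrank K (LinearMap.ker f)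
      = Module.finrank K (LinearMap.ker d) := LinearMap.finrank_range_add_finrank_ker f
  have h3 : Module.finrank K (LinearMap.ker f) ≤ Module.finrank K S :=
    Submodule.finrank_mono hker
  have h4 : Module.finrank K (LinearMap.range f) ≤ Module.finrank K W :=
    Submodule.finrank_le _
  omega
end

section
/- Let V, W, X be finite dimensional vector spaces over a field, ∂ : V → V linear with ∂² = 0, and linear maps Φ : V → W, Ψ : W → V, F : V → X, G : X → V, R : V → V satisfying Ψ∘Φ + G∘F = id_V + R∘∂ + ∂∘R. Then dim H(V,∂) ≤ dim W + dim X. -/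
/-- If `Ψ∘Φ + G∘F = id + R∘d + d∘R` with `d² = 0`, then
`dim H(V,d) ≤ dim W + dim X`. -/
theorem homology_dim_le_add (K V W X : Type*) [Field K]
    [AddCommGroup V] [Module K V] [FiniteDimensional K V]
    [AddCommGroup W] [Module K W] [FiniteDimensional K W]
    [AddCommGroup X] [Module K X] [FiniteDimensional K X]
    (d : V →ₗ[K] V) (hd : d ∘ₗ d = 0)
    (Φ : V →ₗ[K] W) (Ψ : W →ₗ[K] V)
    (F : V →ₗ[K] X) (G : X →ₗ[K] V) (R : V →ₗ[K] V)
    (h : Ψ ∘ₗ Φ + G ∘ₗ F = LinearMap.id + R ∘ₗ d + d ∘ₗ R) :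
    Module.finrank K
        (LinearMap.ker d ⧸ (LinearMap.range d).comap (LinearMap.ker d).subtype)
      ≤ Module.finrank K W + Module.finrank K X := by
  set S := LinearMap.ker d
  set N := (LinearMap.range d).comap S.subtype
  set T : S →ₗ[K] W × X := (Φ ∘ₗ S.subtype).prod (F ∘ₗ S.subtype) with hT
  have hker : LinearMap.ker T ≤ N := by
    intro v hv
    have hv' : Φ (v : V) = 0 ∧ F (v : V) = 0 := by
      have := (LinearMap.mem_ker.mp hv)
      simpa [hT, Prod.ext_iff] using this
    have hdv : d (v : V) = 0 := v.2
    have h1 := congrArg (fun f => f (v : V)) h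
    simp only [LinearMap.add_apply, LinearMap.comp_apply, LinearMap.id_apply,
      hv'.1, hv'.2, hdv, map_zero] at h1
    have h2 : (v : V) + d (R (v : V)) = 0 := by
      have := h1.symm
      simpa using this
    refine ⟨-(R (v : V)), ?_⟩
    rw [map_neg]
    exact (eq_neg_of_add_eq_zero_left h2).symm
  have e1 : Module.finrank K (S ⧸ N) + Module.finrank K N = Module.finrank K S :=
    Submodule.finrank_quotient_add_finrank N
  have e2 : Module.finrank K (LinearMap.range T) + Module.finrank K (LinearMap.ker T)
      = Module.finrank K S := LinearMap.finrank_range_add_finrank_ker T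
  have h3 : Module.finrank K (LinearMap.ker T) ≤ Module.finrank K N :=
    Submodule.finrank_mono hker
  have h4 : Module.finrank K (LinearMap.range T) ≤ Module.finrank K (W × X) :=
    (LinearMap.range T).finrank_le
  have h5 : Module.finrank K (W × X) = Module.finrank K W + Module.finrank K X :=
    Module.finrank_prod
  omega
end

section
/- Let a : ℝ → ℂ be a differentiable function satisfying the ODE a'(s) + 2π(k + η(s))·a(s) = 0, where k ∈ ℤ and η : ℝ → ℝ is continuous with lim_{s→−∞} η(s) = k⁻ and lim_{s→+∞} η(s) = k⁺ for integers k⁻ ≥ k⁺. If a tends to 0 exponentially at both ends (i.e. there is δ > 0 with e^{δ|s|}a(s) bounded), and a is not identically zero, then k > −k⁺ and k < −k⁻, a contradiction; hence a ≡ 0. -/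
set_option maxHeartbeats 800000


open Filter

/-- Fourier-mode argument: a solution of `a' + 2π(k+η)a = 0` that decays
exponentially at both ends, where `η → k⁻` at `-∞` and `η → k⁺` at `+∞`
with `k⁻ ≥ k⁺`, vanishes identically. -/
theorem fourier_mode_vanishes (a : ℝ → ℂ) (η : ℝ → ℝ) (k km kp : ℤ)
    (ha : Differentiable ℝ a)
    (hode : ∀ s : ℝ, deriv a s + ((2 * Real.pi * ((k : ℝ) + η s) : ℝ) : ℂ) * a s = 0)
    (hη : Continuous η)
    (hm : Tendsto η atBot (nhds (km : ℝ)))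
    (hp : Tendsto η atTop (nhds (kp : ℝ)))
    (hk : kp ≤ km)
    (hdecay : ∃ δ : ℝ, 0 < δ ∧ ∃ C : ℝ, ∀ s : ℝ,
      Real.exp (δ * |s|) * ‖a s‖ ≤ C) :
    ∀ s : ℝ, a s = 0 := by
  obtain ⟨δ, hδ, C, hC⟩ := hdecay
  set f : ℝ → ℝ := fun t => (k : ℝ) + η t with hfdef
  have hfc : Continuous f := continuous_const.add hη
  set E : ℝ → ℝ := fun s => ∫ t in (0:ℝ)..s, f t with hEdef
  have hEderiv : ∀ s, HasDerivAt E (f s) s := fun s =>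
    intervalIntegral.integral_hasDerivAt_right (hfc.intervalIntegrable _ _)
      (hfc.stronglyMeasurableAtFilter _ _) hfc.continuousAt
  set F : ℝ → ℂ := fun s => a s * Complex.exp (((2 * Real.pi * E s : ℝ) : ℂ)) with hFdef
  have hFd : ∀ s, HasDerivAt F 0 s := by
    intro s
    have h1 : HasDerivAt (fun s => ((2 * Real.pi * E s : ℝ) : ℂ))
        ((2 * Real.pi * f s : ℝ) : ℂ) s := ((hEderiv s).const_mul (2 * Real.pi)).ofReal_comp
    have h2 := h1.cexp
    have h3 := (ha s).hasDerivAt.mul h2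
    refine h3.congr_deriv ?_
    simp only [hfdef]
    linear_combination (Complex.exp (((2 * Real.pi * E s : ℝ) : ℂ))) * hode s
  have hconst : ∀ s, F s = F 0 := fun s =>
    is_const_of_deriv_eq_zero (fun x => (hFd x).differentiableAt) (fun x => (hFd x).deriv) s 0
  have hE0 : E 0 = 0 := intervalIntegral.integral_same
  have habs : ∀ s, ‖a s‖ * Real.exp (2 * Real.pi * E s) = ‖a 0‖ := by
    intro s
    have := congrArg norm (hconst s)
    simpa [hFdef, hE0, map_mul, Complex.norm_exp] using this
  -- main claim: a 0 = 0
  have h0 : a 0 = 0 := by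
    by_contra h0
    have hA : 0 < ‖a 0‖ := by simpa using h0
    set A := ‖a 0‖ with hAdef
    have habs' : ∀ s, ‖a s‖ = A * Real.exp (-(2 * Real.pi * E s)) := by
      intro s
      rw [← habs s, Real.exp_neg]
      field_simp
    have key : ∀ s, Real.exp (δ * |s| - 2 * Real.pi * E s) ≤ C / A := by
      intro s
      rw [le_div_iff₀ hA]
      calc Real.exp (δ * |s| - 2 * Real.pi * E s) * A
          = Real.exp (δ * |s|) * ‖a s‖ := by
            rw [habs' s, Real.exp_sub, Real.exp_neg]; ring
        _ ≤ C := hC s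
    have hone : (1:ℝ) ≤ C / A := by have := key 0; simpa [hE0] using this
    have hCA : 0 < C / A := lt_of_lt_of_le zero_lt_one hone
    set T := Real.log (C / A) with hTdef
    have keyT : ∀ s, δ * |s| - 2 * Real.pi * E s ≤ T := by
      intro s
      have := key s
      rwa [← Real.exp_le_exp, Real.exp_log hCA]
    have hπ : (0:ℝ) < Real.pi := Real.pi_pos
    set ε := δ / (4 * Real.pi) with hεdef
    have hε : 0 < ε := by positivity
    have hεδ : 2 * Real.pi * ε = δ / 2 := by rw [hεdef]; field_simp; norm_num
    -- at +infinity : k + kp > 0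
    have hkp : (0:ℝ) < (k:ℝ) + kp := by
      by_contra hle
      push_neg at hle
      obtain ⟨s₀, hs₀⟩ := (eventually_atTop.mp ((Metric.tendsto_nhds.mp hp) ε hε))
      set s₁ := max s₀ 0 with hs₁def
      have hs₁0 : 0 ≤ s₁ := le_max_right _ _
      set B := 2 * Real.pi * E s₁ with hBdef
      set S := max s₁ ((T + B + 1) * (2 / δ)) with hSdef
      have hSs₁ : s₁ ≤ S := le_max_left _ _
      have hS0 : 0 ≤ S := le_trans hs₁0 hSs₁
      have hint : ∫ t in s₁..S, f t ≤ (S - s₁) * ((k:ℝ) + kp + ε) := by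
        have := intervalIntegral.integral_mono_on hSs₁ (hfc.intervalIntegrable _ _)
          (_root_.intervalIntegrable_const (c := (k:ℝ) + kp + ε) (μ := MeasureTheory.volume)) (fun t ht => ?_)
        · rw [intervalIntegral.integral_const, smul_eq_mul] at this; exact this
        · have := hs₀ t (le_trans (le_max_left _ _) ht.1)
          have := abs_lt.mp (by simpa [Real.dist_eq] using this)
          simp only [hfdef]
          linarith [this.2]
      have hEeq : E S = E s₁ + ∫ t in s₁..S, f t := by
        rw [hEdef]
        exact (intervalIntegral.integral_add_adjacent_intervals
          (hfc.intervalIntegrable _ _) (hfc.intervalIntegrable _ _)).symm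
      have hineq : δ * |S| - 2 * Real.pi * E S ≥ δ / 2 * S - B := by
        rw [abs_of_nonneg hS0, hEeq]
        have h5 : 2 * Real.pi * ((S - s₁) * ((k:ℝ) + kp + ε)) ≤ δ / 2 * S := by
          have h6 : (S - s₁) * ((k:ℝ) + kp + ε) ≤ (S - s₁) * ε := by
            apply mul_le_mul_of_nonneg_left _ (by linarith)
            linarith
          calc 2 * Real.pi * ((S - s₁) * ((k:ℝ) + kp + ε))
              ≤ 2 * Real.pi * ((S - s₁) * ε) := by
                apply mul_le_mul_of_nonneg_left h6 (by positivity)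
            _ = δ / 2 * (S - s₁) := by rw [← hεδ]; ring
            _ ≤ δ / 2 * S := by nlinarith
        have h7 : 2 * Real.pi * (∫ t in s₁..S, f t) ≤ δ / 2 * S - 0 := by
          nlinarith [mul_le_mul_of_nonneg_left hint (by positivity : (0:ℝ) ≤ 2 * Real.pi)]
        nlinarith
      have hSbig : (T + B + 1) * (2 / δ) ≤ S := le_max_right _ _
      have : δ / 2 * S - B ≥ T + 1 := by
        have := mul_le_mul_of_nonneg_left hSbig (by positivity : (0:ℝ) ≤ δ / 2)
        have h8 : δ / 2 * ((T + B + 1) * (2 / δ)) = T + B + 1 := by field_simp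
        nlinarith
      linarith [keyT S]
    -- at -infinity : k + km < 0
    have hkm : (k:ℝ) + km < 0 := by
      by_contra hle
      push_neg at hle
      obtain ⟨s₀, hs₀⟩ := (eventually_atBot.mp ((Metric.tendsto_nhds.mp hm) ε hε))
      set s₁ := min s₀ 0 with hs₁def
      have hs₁0 : s₁ ≤ 0 := min_le_right _ _
      set B := 2 * Real.pi * E s₁ with hBdef
      set S := min s₁ (-((T + B + 1) * (2 / δ))) with hSdef
      have hSs₁ : S ≤ s₁ := min_le_left _ _
      have hS0 : S ≤ 0 := le_trans hSs₁ hs₁0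
      have hint : (s₁ - S) * ((k:ℝ) + km - ε) ≤ ∫ t in S..s₁, f t := by
        have := intervalIntegral.integral_mono_on hSs₁
          (_root_.intervalIntegrable_const (c := (k:ℝ) + km - ε) (μ := MeasureTheory.volume))
          (hfc.intervalIntegrable _ _) (fun t ht => ?_)
        · rw [intervalIntegral.integral_const, smul_eq_mul] at this; exact this
        · have := hs₀ t (le_trans ht.2 (min_le_left _ _))
          have := abs_lt.mp (by simpa [Real.dist_eq] using this)
          simp only [hfdef]
          linarith [this.1]
      have hEeq : E S = E s₁ - ∫ t in S..s₁, f t := by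
        have : E s₁ = E S + ∫ t in S..s₁, f t := by
          rw [hEdef]
          exact (intervalIntegral.integral_add_adjacent_intervals
            (hfc.intervalIntegrable _ _) (hfc.intervalIntegrable _ _)).symm
        linarith
      have hineq : δ * |S| - 2 * Real.pi * E S ≥ -(δ / 2) * S - B := by
        rw [abs_of_nonpos hS0, hEeq]
        have h6 : (s₁ - S) * (-ε) ≤ (s₁ - S) * ((k:ℝ) + km - ε) := by
          apply mul_le_mul_of_nonneg_left _ (by linarith)
          linarith
        have h7 : 2 * Real.pi * ((s₁ - S) * (-ε)) ≤ 2 * Real.pi * (∫ t in S..s₁, f t) := by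
          apply mul_le_mul_of_nonneg_left _ (by positivity)
          linarith [le_trans h6 hint]
        have h8 : 2 * Real.pi * ((s₁ - S) * (-ε)) = -(δ / 2) * (s₁ - S) := by
          rw [show 2 * Real.pi * ((s₁ - S) * (-ε)) = -(2 * Real.pi * ε) * (s₁ - S) by ring, hεδ]
        have h9 : 0 ≤ -(δ / 2) * s₁ := by nlinarith
        have h10 : -(δ / 2) * (s₁ - S) ≤ 2 * Real.pi * ∫ t in S..s₁, f t := h8 ▸ h7
        nlinarith
      have hSbig : S ≤ -((T + B + 1) * (2 / δ)) := min_le_right _ _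
      have : -(δ / 2) * S - B ≥ T + 1 := by
        have := mul_le_mul_of_nonneg_left (neg_le_neg hSbig) (by positivity : (0:ℝ) ≤ δ / 2)
        have h8 : δ / 2 * ((T + B + 1) * (2 / δ)) = T + B + 1 := by field_simp
        nlinarith
      linarith [keyT S]
    have : (k:ℝ) + kp ≤ (k:ℝ) + km := by
      have : (kp:ℝ) ≤ km := by exact_mod_cast hk
      linarith
    linarith
  intro s
  have := habs s
  rw [show ‖a 0‖ = 0 by simp [h0]] at this
  have hpos : 0 < Real.exp (2 * Real.pi * E s) := Real.exp_pos _
  have : ‖a s‖ = 0 := by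
    rcases mul_eq_zero.mp this with h | h
    · exact h
    · exact absurd h (ne_of_gt hpos)
  simpa using this
end
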